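/- arXiv:1309.2002 — 4 statements merged into one kernel-verified Lean document; each statement's English description precedes it below -/
import Mathlib

section
/- Let M ≥ 1 and consider subsystems indexed by i ∈ {1,…,M} with state dimensions n_i, and let Ā be the n×n real matrix (n = Σ_i n_i) with blocks Ā_{ij} ∈ ℝ^{n_i×n_j}. For each i let E_i ⊂ ℝ^{n_i} be a zonotope centered at the origin with dual representation E_i = {x : H_i x ≤ 1} = {Ξ_i d : ‖d‖_∞ ≤ 1}, where H_i has full column rank n_i and H_i^♭ denotes a left inverse of H_i (H_i^♭ H_i = I). Assume: (a) every diagonal block Ā_{ii} is Schur, and (b) for every i, β_i := Σ_{j≠i} Σ_{k=0}^∞ ‖H_i Ā_{ii}^k Ā_{ij} H_j^♭‖_∞ < 1 (the series being convergent). Then the full matrix Ā is Schur, i.e., its spectral radius is strictly less than 1. -/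
open scoped BigOperators
open Matrix

noncomputable section

/-- Induced infinity norm of a real matrix: maximum over rows of the sum of
absolute values of the entries of that row. -/
def matInfNorm {m n : Type*} [Fintype m] [Fintype n] (A : Matrix m n ℝ) : ℝ :=
  ⨆ i, ∑ j, |A i j|

/-- Infinity norm of a vector. -/
def vecInfNorm {m : Type*} [Fintype m] (v : m → ℝ) : ℝ := ⨆ i, |v i|

/-- A real square matrix is Schur if all of its complex eigenvalues lie strictly
inside the unit circle. -/
def IsSchur {ι : Type*} [Fintype ι] [DecidableEq ι] (A : Matrix ι ι ℝ) : Prop :=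
  ∀ μ ∈ spectrum ℂ (A.map (algebraMap ℝ ℂ)), ‖μ‖ < 1

namespace Prop1Aux

open Filter Topology

attribute [local instance] Matrix.linftyOpNormedAddCommGroup Matrix.linftyOpNormedSpace
  Matrix.linftyOpNormedRing Matrix.linftyOpNormedAlgebra

lemma rowSum_le_matInfNorm {m n : Type*} [Fintype m] [Fintype n] (B : Matrix m n ℝ) (t : m) :
    ∑ j, |B t j| ≤ matInfNorm B :=
  le_ciSup (f := fun t => ∑ j, |B t j|) (Set.Finite.bddAbove (Set.finite_range _)) t

lemma matInfNorm_nonneg {m n : Type*} [Fintype m] [Fintype n] (B : Matrix m n ℝ) :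
    0 ≤ matInfNorm B := by
  rcases isEmpty_or_nonempty m with h | h
  · simp [matInfNorm, Real.iSup_of_isEmpty]
  · obtain ⟨t⟩ := h
    exact le_trans (Finset.sum_nonneg fun j _ => abs_nonneg _) (rowSum_le_matInfNorm B t)

lemma mulVec_map_entry_bound {a b : ℕ} (B : Matrix (Fin a) (Fin b) ℝ) (w : Fin b → ℂ) (t : Fin a) :
    ‖(B.map (algebraMap ℝ ℂ)).mulVec w t‖ ≤ matInfNorm B * ‖w‖ := by
  have h1 : (B.map (algebraMap ℝ ℂ)).mulVec w t = ∑ q, (algebraMap ℝ ℂ) (B t q) * w q := rfl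
  rw [h1]
  refine le_trans (norm_sum_le _ _) ?_
  have h2 : ∀ q : Fin b, ‖(algebraMap ℝ ℂ) (B t q) * w q‖ ≤ |B t q| * ‖w‖ := by
    intro q
    rw [norm_mul]
    have h3 : ‖(algebraMap ℝ ℂ) (B t q)‖ = |B t q| := by
      simp [Complex.norm_real]
    rw [h3]
    exact mul_le_mul_of_nonneg_left (norm_le_pi_norm w q) (abs_nonneg _)
  refine le_trans (Finset.sum_le_sum fun q _ => h2 q) ?_
  rw [← Finset.sum_mul]
  exact mul_le_mul_of_nonneg_right (rowSum_le_matInfNorm B t) (norm_nonneg _)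

lemma map_pow_alg {d : ℕ} (B : Matrix (Fin d) (Fin d) ℝ) (k : ℕ) :
    (B ^ k).map (algebraMap ℝ ℂ) = (B.map (algebraMap ℝ ℂ)) ^ k := by
  induction k with
  | zero => simp [pow_zero, Matrix.map_one _ (map_zero _) (map_one _)]
  | succ k ih => rw [pow_succ, pow_succ, Matrix.map_mul, ih]

lemma pow_norm_tendsto_zero {d : ℕ} (a : Matrix (Fin d) (Fin d) ℂ)
    (h : ∀ μ ∈ spectrum ℂ a, ‖μ‖ < 1) :
    Tendsto (fun N : ℕ => ‖a ^ N‖) atTop (𝓝 0) := by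
  rcases isEmpty_or_nonempty (Fin d) with hd | hd
  · have hz : ∀ N : ℕ, ‖a ^ N‖ = 0 := by
      intro N
      have : (a ^ N) = 0 := Subsingleton.elim _ _
      rw [this, norm_zero]
    simp only [hz]
    exact tendsto_const_nhds
  · haveI : Nontrivial (Matrix (Fin d) (Fin d) ℂ) := inferInstance
    haveI : CompleteSpace (Matrix (Fin d) (Fin d) ℂ) := FiniteDimensional.complete ℂ _
    have hne : (spectrum ℂ a).Nonempty := spectrum.nonempty a
    have hρ : spectralRadius ℂ a < 1 := by
      have := spectrum.spectralRadius_lt_of_forall_lt_of_nonempty hne (r := 1)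
        (fun k hk => by have := h k hk; rw [← coe_nnnorm] at this; exact_mod_cast this)
      simpa using this
    obtain ⟨r, hr1, hr2⟩ := exists_between hρ
    have hrtop : r ≠ ⊤ := (hr2.trans_le le_top).ne
    set r' : NNReal := r.toNNReal with hr'
    have hrr : r = (r' : ENNReal) := (ENNReal.coe_toNNReal hrtop).symm
    have hr'1 : (r' : ℝ) < 1 := by
      have := hr2
      rw [hrr] at this
      exact_mod_cast this
    have hGel := spectrum.pow_nnnorm_pow_one_div_tendsto_nhds_spectralRadius a
    have hev : ∀ᶠ N : ℕ in atTop, ((‖a ^ N‖₊ : ENNReal) ^ (1 / (N:ℝ))) < r :=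
      hGel.eventually_lt_const hr1
    have hbound : ∀ᶠ N : ℕ in atTop, ‖a ^ N‖ ≤ (r' : ℝ) ^ N := by
      filter_upwards [hev, eventually_ge_atTop 1] with N hN hN1
      have hNne : (N : ℝ) ≠ 0 := Nat.cast_ne_zero.mpr (Nat.one_le_iff_ne_zero.mp hN1)
      have h1 : ((‖a ^ N‖₊ : ENNReal) ^ (1 / (N:ℝ))) ^ (N:ℝ) ≤ r ^ (N:ℝ) :=
        ENNReal.rpow_le_rpow hN.le (Nat.cast_nonneg N)
      rw [← ENNReal.rpow_mul, one_div, inv_mul_cancel₀ hNne, ENNReal.rpow_one] at h1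
      rw [hrr, ← ENNReal.coe_rpow_of_nonneg _ (Nat.cast_nonneg N)] at h1
      have h2 : ‖a ^ N‖₊ ≤ r' ^ (N:ℝ) := ENNReal.coe_le_coe.mp h1
      have h3 : ‖a ^ N‖ ≤ ((r' ^ (N:ℝ) : NNReal) : ℝ) := h2
      rwa [NNReal.coe_rpow, Real.rpow_natCast] at h3
    have hpow : Tendsto (fun N : ℕ => (r' : ℝ) ^ N) atTop (𝓝 0) :=
      tendsto_pow_atTop_nhds_zero_of_lt_one r'.coe_nonneg hr'1
    exact squeeze_zero' (Eventually.of_forall fun N => norm_nonneg _) hbound hpow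

lemma neumann_identity {d : ℕ} (a : Matrix (Fin d) (Fin d) ℂ) (μ : ℂ) (hμ : μ ≠ 0)
    (e r : Fin d → ℂ) (h : μ • e = a.mulVec e + r) : ∀ N : ℕ,
    e = (μ⁻¹)^(N+1) • (a^(N+1)).mulVec e
        + ∑ k ∈ Finset.range (N+1), (μ⁻¹)^(k+1) • (a^k).mulVec r := by
  have h0 : e = μ⁻¹ • (a.mulVec e) + μ⁻¹ • r := by
    calc e = μ⁻¹ • (μ • e) := by rw [smul_smul, inv_mul_cancel₀ hμ, one_smul]
    _ = _ := by rw [h, smul_add]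
  intro N
  induction N with
  | zero => simpa [pow_one, pow_zero, Matrix.one_mulVec] using h0
  | succ N ih =>
    calc e = (μ⁻¹)^(N+1) • (a^(N+1)).mulVec e
        + ∑ k ∈ Finset.range (N+1), (μ⁻¹)^(k+1) • (a^k).mulVec r := ih
    _ = (μ⁻¹)^(N+1) • (a^(N+1)).mulVec (μ⁻¹ • (a.mulVec e) + μ⁻¹ • r)
        + ∑ k ∈ Finset.range (N+1), (μ⁻¹)^(k+1) • (a^k).mulVec r := by rw [← h0]
    _ = (μ⁻¹)^(N+1+1) • (a^(N+1+1)).mulVec e + ((μ⁻¹)^(N+1+1) • (a^(N+1)).mulVec r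
        + ∑ k ∈ Finset.range (N+1), (μ⁻¹)^(k+1) • (a^k).mulVec r) := by
        rw [Matrix.mulVec_add, Matrix.mulVec_smul, Matrix.mulVec_smul, Matrix.mulVec_mulVec,
          ← pow_succ, smul_add, smul_smul, smul_smul, ← pow_succ, add_assoc]
    _ = (μ⁻¹)^(N+1+1) • (a^(N+1+1)).mulVec e
        + ∑ k ∈ Finset.range (N+1+1), (μ⁻¹)^(k+1) • (a^k).mulVec r := by
        conv_rhs => rw [Finset.sum_range_succ]
        abel

end Prop1Aux

open Prop1Aux Filter Topology

attribute [local instance] Matrix.linftyOpNormedAddCommGroup Matrix.linftyOpNormedSpace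
  Matrix.linftyOpNormedRing Matrix.linftyOpNormedAlgebra

/-- Proposition 1, part (I): under the small-gain conditions `β i < 1` and Schurness of
the diagonal blocks, the full block matrix `Ā` is Schur. -/
theorem prop1_part_I
    (M : ℕ) (hM : 1 ≤ M)
    (n τ nb : Fin M → ℕ)
    (A : ∀ i j : Fin M, Matrix (Fin (n i)) (Fin (n j)) ℝ)
    (H : ∀ i, Matrix (Fin (τ i)) (Fin (n i)) ℝ)
    (Hflat : ∀ i, Matrix (Fin (n i)) (Fin (τ i)) ℝ)
    (Ξ : ∀ i, Matrix (Fin (n i)) (Fin (nb i)) ℝ)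
    (E : ∀ i, Set (Fin (n i) → ℝ))
    -- each `H i` has full column rank and `Hflat i` is a left inverse of `H i`
    (hrank : ∀ i, (H i).rank = n i)
    (hleft : ∀ i, Hflat i * H i = 1)
    -- dual representation of the zonotopes `E i`
    (hEdual : ∀ i, E i = {x | ∀ t, (H i).mulVec x t ≤ 1})
    (hEgen : ∀ i, E i = {x | ∃ d : Fin (nb i) → ℝ, vecInfNorm d ≤ 1 ∧ x = (Ξ i).mulVec d})
    -- (a) each diagonal block is Schur
    (hSchur : ∀ i, IsSchur (A i i))
    -- (b) the series defining `β i` converge and `β i < 1`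
    (hSummable : ∀ i j, j ≠ i →
      Summable (fun k : ℕ => matInfNorm (H i * (A i i) ^ k * A i j * Hflat j)))
    (hbeta : ∀ i,
      ∑ j ∈ Finset.univ.erase i, ∑' k : ℕ,
        matInfNorm (H i * (A i i) ^ k * A i j * Hflat j) < 1) :
    IsSchur (Matrix.of fun p q : Σ i, Fin (n i) => A p.1 q.1 p.2 q.2) := by
  intro μ hμspec
  by_contra hge
  push_neg at hge
  have hμ0 : μ ≠ 0 := by
    intro h
    rw [h, norm_zero] at hge
    linarith
  set Ab : Matrix (Σ i, Fin (n i)) (Σ i, Fin (n i)) ℂ :=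
    (Matrix.of fun p q : Σ i, Fin (n i) => A p.1 q.1 p.2 q.2).map (algebraMap ℝ ℂ) with hAbdef
  -- obtain an eigenvector
  have hnu : ¬ IsUnit ((algebraMap ℂ (Matrix (Σ i, Fin (n i)) (Σ i, Fin (n i)) ℂ)) μ - Ab) :=
    spectrum.mem_iff.mp hμspec
  have hdet : ((algebraMap ℂ (Matrix (Σ i, Fin (n i)) (Σ i, Fin (n i)) ℂ)) μ - Ab).det = 0 := by
    by_contra hd
    exact hnu ((Matrix.isUnit_iff_isUnit_det _).mpr (isUnit_iff_ne_zero.mpr hd))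
  obtain ⟨v, hv0, hveq⟩ := (Matrix.exists_mulVec_eq_zero_iff).mpr hdet
  have hAv : Ab.mulVec v = μ • v := by
    rw [Matrix.sub_mulVec] at hveq
    have h1 : (algebraMap ℂ (Matrix (Σ i, Fin (n i)) (Σ i, Fin (n i)) ℂ) μ) *ᵥ v = μ • v := by
      rw [Algebra.algebraMap_eq_smul_one, Matrix.smul_mulVec, Matrix.one_mulVec]
    rw [h1] at hveq
    exact (sub_eq_zero.mp hveq).symm
  -- block decomposition
  set Ac : ∀ i j, Matrix (Fin (n i)) (Fin (n j)) ℂ :=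
    fun i j => (A i j).map (algebraMap ℝ ℂ) with hAcdef
  set e : ∀ i, Fin (n i) → ℂ := fun i t => v ⟨i, t⟩ with hedef
  set rr : ∀ i, Fin (n i) → ℂ :=
    fun i => ∑ j ∈ Finset.univ.erase i, (Ac i j).mulVec (e j) with hrrdef
  have hblock : ∀ i, μ • e i = (Ac i i).mulVec (e i) + rr i := by
    intro i
    funext t
    have h1 : (Ab.mulVec v) ⟨i, t⟩ = μ * v ⟨i, t⟩ := by rw [hAv]; rfl
    have h2 : (Ab.mulVec v) ⟨i, t⟩ = ∑ j, ((Ac i j).mulVec (e j)) t := by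
      show ∑ q : Σ j, Fin (n j), Ab ⟨i,t⟩ q * v q = _
      rw [← Finset.univ_sigma_univ, Finset.sum_sigma]
      rfl
    calc (μ • e i) t = μ * v ⟨i,t⟩ := rfl
    _ = ∑ j, ((Ac i j).mulVec (e j)) t := by rw [← h1, h2]
    _ = ((Ac i i).mulVec (e i)) t + ∑ j ∈ Finset.univ.erase i, ((Ac i j).mulVec (e j)) t := by
        rw [← Finset.sum_erase_add _ _ (Finset.mem_univ i), add_comm]
    _ = ((Ac i i).mulVec (e i) + rr i) t := by
        simp [hrrdef, Finset.sum_apply]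
  -- the H-transformed error vectors
  set Hc : ∀ i, Matrix (Fin (τ i)) (Fin (n i)) ℂ :=
    fun i => (H i).map (algebraMap ℝ ℂ) with hHcdef
  set Hfc : ∀ i, Matrix (Fin (n i)) (Fin (τ i)) ℂ :=
    fun i => (Hflat i).map (algebraMap ℝ ℂ) with hHfcdef
  set vH : ∀ i, Fin (τ i) → ℂ := fun i => (Hc i).mulVec (e i) with hvHdef
  have heH : ∀ j, (Hfc j).mulVec (vH j) = e j := by
    intro j
    rw [hvHdef]
    rw [Matrix.mulVec_mulVec]
    have h1 : Hfc j * Hc j = 1 := by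
      rw [hHfcdef, hHcdef, ← Matrix.map_mul, hleft j,
        Matrix.map_one _ (map_zero _) (map_one _)]
    rw [h1, Matrix.one_mulVec]
  -- maximizing index
  obtain ⟨i0, -, hi0⟩ := Finset.exists_max_image (Finset.univ : Finset (Fin M))
    (fun j => ‖vH j‖) ⟨⟨0, hM⟩, Finset.mem_univ _⟩
  set m : ℝ := ‖vH i0‖ with hmdef
  have hm : ∀ j, ‖vH j‖ ≤ m := fun j => hi0 j (Finset.mem_univ _)
  have hm0 : 0 ≤ m := norm_nonneg _
  -- the β's
  set β : Fin M → ℝ := fun i => ∑ j ∈ Finset.univ.erase i, ∑' k : ℕ,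
    matInfNorm (H i * (A i i) ^ k * A i j * Hflat j) with hβdef
  have hβ0 : ∀ i, 0 ≤ β i := fun i =>
    Finset.sum_nonneg fun j _ => tsum_nonneg fun k => matInfNorm_nonneg _
  -- small-gain bound
  have hμinv : ∀ k : ℕ, ‖(μ⁻¹)^k‖ ≤ 1 := by
    intro k
    rw [norm_pow]
    refine pow_le_one₀ (norm_nonneg _) ?_
    rw [norm_inv]
    exact inv_le_one_of_one_le₀ hge
  have hkey : ∀ i, ‖vH i‖ ≤ β i * m := by
    intro i
    rw [pi_norm_le_iff_of_nonneg (mul_nonneg (hβ0 i) hm0)]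
    intro t
    have hid := neumann_identity (Ac i i) μ hμ0 (e i) (rr i) (hblock i)
    -- per-k bound on the summands
    have hmap : ∀ (k : ℕ) (j : Fin M),
        (H i * (A i i)^k * A i j * Hflat j).map (algebraMap ℝ ℂ)
          = Hc i * (Ac i i)^k * (Ac i j * Hfc j) := by
      intro k j
      rw [Matrix.map_mul, Matrix.map_mul, Matrix.map_mul, map_pow_alg, Matrix.mul_assoc]
    have hterm : ∀ k : ℕ, ‖((Hc i).mulVec ((Ac i i ^ k).mulVec (rr i))) t‖ ≤
        ∑ j ∈ Finset.univ.erase i,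
          matInfNorm (H i * (A i i)^k * A i j * Hflat j) * m := by
      intro k
      have hexp : (Hc i).mulVec ((Ac i i ^ k).mulVec (rr i)) =
          ∑ j ∈ Finset.univ.erase i,
            ((H i * (A i i)^k * A i j * Hflat j).map (algebraMap ℝ ℂ)).mulVec (vH j) := by
        rw [Matrix.mulVec_mulVec, hrrdef]
        have hsum := map_sum ((Hc i * Ac i i ^ k).mulVecLin)
          (fun j => (Ac i j).mulVec (e j)) (Finset.univ.erase i)
        simp only [Matrix.mulVecLin_apply] at hsum
        rw [hsum]
        refine Finset.sum_congr rfl fun j hj => ?_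
        rw [← heH j, Matrix.mulVec_mulVec, Matrix.mulVec_mulVec, hmap, ← Matrix.mul_assoc]
      rw [hexp, Finset.sum_apply]
      refine le_trans (norm_sum_le _ _) (Finset.sum_le_sum fun j hj => ?_)
      refine le_trans (mulVec_map_entry_bound _ _ t) ?_
      exact mul_le_mul_of_nonneg_left (hm j) (matInfNorm_nonneg _)
    -- expansion of vH i t for each N
    have hexpand : ∀ N : ℕ, vH i t = (μ⁻¹)^(N+1) * ((Hc i).mulVec ((Ac i i^(N+1)).mulVec (e i)) t)
        + ∑ k ∈ Finset.range (N+1),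
            (μ⁻¹)^(k+1) * ((Hc i).mulVec ((Ac i i^k).mulVec (rr i)) t) := by
      intro N
      have h1 : (Hc i).mulVec (e i)
          = (μ⁻¹)^(N+1) • ((Hc i).mulVec ((Ac i i^(N+1)).mulVec (e i)))
          + ∑ k ∈ Finset.range (N+1),
              (μ⁻¹)^(k+1) • ((Hc i).mulVec ((Ac i i^k).mulVec (rr i))) := by
        conv_lhs => rw [hid N]
        rw [Matrix.mulVec_add, Matrix.mulVec_smul]
        congr 1
        have hsum := map_sum ((Hc i).mulVecLin)
          (fun k => (μ⁻¹)^(k+1) • ((Ac i i^k).mulVec (rr i))) (Finset.range (N+1))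
        simp only [Matrix.mulVecLin_apply] at hsum
        rw [hsum]
        exact Finset.sum_congr rfl fun k _ => by rw [Matrix.mulVec_smul]
      have h2 := congrFun h1 t
      simpa [Finset.sum_apply, Pi.smul_apply, smul_eq_mul] using h2
    -- norm bound for each N
    have hboundN : ∀ N : ℕ, ‖vH i t‖ ≤
        matInfNorm (H i) * (‖Ac i i ^ (N+1)‖ * ‖e i‖) + β i * m := by
      intro N
      rw [hexpand N]
      refine le_trans (norm_add_le _ _) (add_le_add ?_ ?_)
      · rw [norm_mul]
        refine le_trans (mul_le_mul (hμinv (N+1))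
          (le_trans (mulVec_map_entry_bound _ _ t)
            (mul_le_mul_of_nonneg_left (Matrix.linfty_opNorm_mulVec _ _)
              (matInfNorm_nonneg _)))
          (norm_nonneg _) zero_le_one) ?_
        rw [one_mul]
      · refine le_trans (norm_sum_le _ _) ?_
        have hsb : ∀ k ∈ Finset.range (N+1),
            ‖(μ⁻¹)^(k+1) * ((Hc i).mulVec ((Ac i i^k).mulVec (rr i)) t)‖ ≤
            ∑ j ∈ Finset.univ.erase i,
              matInfNorm (H i * (A i i)^k * A i j * Hflat j) * m := by
          intro k _
          rw [norm_mul]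
          refine le_trans (mul_le_mul (hμinv (k+1)) (hterm k) (norm_nonneg _) zero_le_one) ?_
          rw [one_mul]
        refine le_trans (Finset.sum_le_sum hsb) ?_
        rw [Finset.sum_comm]
        rw [hβdef, Finset.sum_mul]
        refine Finset.sum_le_sum fun j hj => ?_
        rw [← Finset.sum_mul]
        refine mul_le_mul_of_nonneg_right ?_ hm0
        exact Summable.sum_le_tsum _ (fun k _ => matInfNorm_nonneg _)
          (hSummable i j (Finset.ne_of_mem_erase hj))
    -- pass to the limit
    have htail : Tendsto (fun N : ℕ => ‖Ac i i ^ N‖) atTop (𝓝 0) :=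
      pow_norm_tendsto_zero (Ac i i) (hSchur i)
    have htail' : Tendsto
        (fun N : ℕ => matInfNorm (H i) * (‖Ac i i ^ (N+1)‖ * ‖e i‖) + β i * m)
        atTop (𝓝 (β i * m)) := by
      have h1 : Tendsto (fun N : ℕ => ‖Ac i i ^ (N+1)‖) atTop (𝓝 0) :=
        htail.comp (tendsto_add_atTop_nat 1)
      have h2 := ((h1.mul_const (‖e i‖)).const_mul (matInfNorm (H i))).add_const (β i * m)
      simpa using h2
    exact ge_of_tendsto' htail' hboundN
  -- conclude
  have hmle : m ≤ β i0 * m := by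
    rw [hmdef]
    exact hkey i0
  have hmzero : m = 0 := by
    have hb1 : β i0 < 1 := hbeta i0
    nlinarith
  have hvH0 : ∀ j, vH j = 0 := by
    intro j
    have : ‖vH j‖ ≤ 0 := hmzero ▸ hm j
    exact norm_le_zero_iff.mp this
  have he0 : ∀ j, e j = 0 := by
    intro j
    rw [← heH j, hvH0 j, Matrix.mulVec_zero]
  apply hv0
  funext p
  obtain ⟨i, t⟩ := p
  have := congrFun (he0 i) t
  simpa [hedef] using this
end
end

section
/- Let M ≥ 1 and consider blocks Ā_{ij} ∈ ℝ^{n_i×n_j}, i,j ∈ {1,…,M}, and for each i a zonotope E_i = {x : H_i x ≤ 1} = {Ξ_i d : ‖d‖_∞ ≤ 1} ⊂ ℝ^{n_i} centered at the origin with H_i of full column rank and left inverse H_i^♭. Assume every Ā_{ii} is Schur and for every i, β_i := Σ_{j≠i} Σ_{k=0}^∞ ‖H_i Ā_{ii}^k Ā_{ij} H_j^♭‖_∞ < 1. Then for every i there exists a nonempty set S_i ⊆ E_i that is robust positively invariant (RPI) for the dynamics e_i⁺ = Ā_{ii} e_i + v_i with disturbance v_i ranging over the Minkowski sum V_i = ⊕_{j≠i}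 Ā_{ij} E_j, and moreover the product S = ∏_{i=1}^M S_i is positively invariant for the coupled dynamics e⁺ = Ā e, where Ā is the block matrix with blocks Ā_{ij}. -/
open scoped BigOperators
open Matrix

noncomputable section

lemma rowsum_le_matInfNorm {m n : Type*} [Fintype m] [Fintype n] (A : Matrix m n ℝ) (t : m) :
    ∑ j, |A t j| ≤ matInfNorm A :=
  le_ciSup (f := fun i => ∑ j, |A i j|) (Set.Finite.bddAbove (Set.finite_range _)) t

lemma matInfNorm_nonneg {m n : Type*} [Fintype m] [Fintype n] (A : Matrix m n ℝ) :
    0 ≤ matInfNorm A := by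
  rcases isEmpty_or_nonempty m with h | ⟨⟨t⟩⟩
  · rw [matInfNorm, iSup_of_empty']
    simp [Real.sSup_empty]
  · exact le_trans (Finset.sum_nonneg fun _ _ => abs_nonneg _) (rowsum_le_matInfNorm A t)

lemma abs_mulVec_le {p q : Type*} [Fintype p] [Fintype q] (C : Matrix p q ℝ) (w : q → ℝ)
    (hw : ∀ s, |w s| ≤ 1) (t : p) : |C.mulVec w t| ≤ matInfNorm C := by
  have h1 : |C.mulVec w t| ≤ ∑ s, |C t s| := by
    calc |∑ s, C t s * w s| ≤ ∑ s, |C t s * w s| := Finset.abs_sum_le_sum_abs _ _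
    _ ≤ ∑ s, |C t s| := Finset.sum_le_sum fun s _ => by
        rw [abs_mul]
        exact mul_le_of_le_one_right (abs_nonneg _) (hw s)
  exact h1.trans (rowsum_le_matInfNorm C t)

lemma mulVec_finsum {p q σ : Type*} [Fintype p] [Fintype q] (M : Matrix p q ℝ)
    (s : Finset σ) (f : σ → q → ℝ) :
    M.mulVec (∑ a ∈ s, f a) = ∑ a ∈ s, M.mulVec (f a) := by
  exact map_sum (M.mulVecLin) f s

/-- Proposition 1, part (II): under the small-gain conditions there exist nonempty
RPI sets `S i ⊆ E i` for the local error dynamics (with coupling treated as a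
disturbance ranging over the Minkowski sum `V i = ⊕_{j≠i} Ā_{ij} E j`), whose
product is positively invariant for the coupled dynamics `e⁺ = Ā e`. -/
theorem prop1_part_II
    (M : ℕ) (hM : 1 ≤ M)
    (n τ nb : Fin M → ℕ)
    (A : ∀ i j : Fin M, Matrix (Fin (n i)) (Fin (n j)) ℝ)
    (H : ∀ i, Matrix (Fin (τ i)) (Fin (n i)) ℝ)
    (Hflat : ∀ i, Matrix (Fin (n i)) (Fin (τ i)) ℝ)
    (Ξ : ∀ i, Matrix (Fin (n i)) (Fin (nb i)) ℝ)
    (E : ∀ i, Set (Fin (n i) → ℝ))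
    (hrank : ∀ i, (H i).rank = n i)
    (hleft : ∀ i, Hflat i * H i = 1)
    (hEdual : ∀ i, E i = {x | ∀ t, (H i).mulVec x t ≤ 1})
    (hEgen : ∀ i, E i = {x | ∃ d : Fin (nb i) → ℝ, vecInfNorm d ≤ 1 ∧ x = (Ξ i).mulVec d})
    (hSchur : ∀ i, IsSchur (A i i))
    (hSummable : ∀ i j, j ≠ i →
      Summable (fun k : ℕ => matInfNorm (H i * (A i i) ^ k * A i j * Hflat j)))
    (hbeta : ∀ i,
      ∑ j ∈ Finset.univ.erase i, ∑' k : ℕ,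
        matInfNorm (H i * (A i i) ^ k * A i j * Hflat j) < 1) :
    ∃ S : ∀ i, Set (Fin (n i) → ℝ),
      (∀ i, (S i).Nonempty) ∧
      (∀ i, S i ⊆ E i) ∧
      -- `S i` is RPI for `e⁺ = Ā_{ii} e + v`, `v ∈ V i = ⊕_{j ≠ i} Ā_{ij} E j`
      (∀ i, ∀ x ∈ S i,
        ∀ v ∈ {v : Fin (n i) → ℝ | ∃ e : ∀ j, Fin (n j) → ℝ,
            (∀ j ∈ Finset.univ.erase i, e j ∈ E j) ∧
            v = ∑ j ∈ Finset.univ.erase i, (A i j).mulVec (e j)},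
          (A i i).mulVec x + v ∈ S i) ∧
      -- the product `S = ∏ i, S i` is positively invariant for `e⁺ = Ā e`
      (∀ e : ∀ j, Fin (n j) → ℝ, (∀ j, e j ∈ S j) →
        ∀ i, (A i i).mulVec (e i) + ∑ j ∈ Finset.univ.erase i, (A i j).mulVec (e j) ∈ S i) := by
  classical
  -- the disturbance sets
  set Vs : ∀ i, Set (Fin (n i) → ℝ) := fun i =>
    {v | ∃ e : ∀ j, Fin (n j) → ℝ,
      (∀ j ∈ Finset.univ.erase i, e j ∈ E j) ∧
      v = ∑ j ∈ Finset.univ.erase i, (A i j).mulVec (e j)} with hVs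
  -- the candidate RPI sets: points reachable from 0
  set Ss : ∀ i, Set (Fin (n i) → ℝ) := fun i =>
    {x | ∃ K : ℕ, ∃ v : ℕ → Fin (n i) → ℝ, (∀ k, v k ∈ Vs i) ∧
      x = ∑ k ∈ Finset.range K, ((A i i) ^ k).mulVec (v k)} with hSs
  have hE0 : ∀ j, (0 : Fin (n j) → ℝ) ∈ E j := by
    intro j
    rw [hEdual]
    intro t
    simp [Matrix.mulVec_zero]
  have hV0 : ∀ i, (0 : Fin (n i) → ℝ) ∈ Vs i := by
    intro i
    exact ⟨fun j => 0, fun j _ => hE0 j, by simp [Matrix.mulVec_zero]⟩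
  have hS0 : ∀ i, (0 : Fin (n i) → ℝ) ∈ Ss i := by
    intro i
    exact ⟨0, fun _ => 0, fun k => hV0 i, by simp⟩
  -- elements of E j have |H j x| ≤ 1 componentwise
  have hEabs : ∀ j, ∀ x ∈ E j, ∀ t, |(H j).mulVec x t| ≤ 1 := by
    intro j x hx t
    have hneg : -x ∈ E j := by
      rw [hEgen] at hx ⊢
      obtain ⟨d, hd, rfl⟩ := hx
      refine ⟨-d, ?_, by simp [Matrix.mulVec_neg]⟩
      simpa [vecInfNorm, abs_neg] using hd
    rw [hEdual] at hx hneg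
    have h1 := hx t
    have h2 := hneg t
    rw [Matrix.mulVec_neg] at h2
    simp only [Pi.neg_apply] at h2
    exact abs_le.2 ⟨by linarith, h1⟩
  -- the key per-term bound
  have hkey : ∀ i j, j ≠ i → ∀ k : ℕ, ∀ x ∈ E j, ∀ t,
      |(H i * (A i i) ^ k * A i j).mulVec x t|
        ≤ matInfNorm (H i * (A i i) ^ k * A i j * Hflat j) := by
    intro i j hj k x hx t
    have hx' : x = (Hflat j).mulVec ((H j).mulVec x) := by
      rw [Matrix.mulVec_mulVec, hleft, Matrix.one_mulVec]
    have heq : (H i * (A i i) ^ k * A i j).mulVec x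
        = (H i * (A i i) ^ k * A i j * Hflat j).mulVec ((H j).mulVec x) := by
      conv_lhs => rw [hx']
      rw [Matrix.mulVec_mulVec]
    rw [heq]
    exact abs_mulVec_le _ _ (hEabs j x hx) t
  -- S i ⊆ E i
  have hsub : ∀ i, Ss i ⊆ E i := by
    intro i x hx
    obtain ⟨K, v, hv, rfl⟩ := hx
    rw [hEdual]
    intro t
    choose e he hveq using hv
    have expand : (H i).mulVec (∑ k ∈ Finset.range K, ((A i i) ^ k).mulVec (v k)) t
        = ∑ k ∈ Finset.range K, ∑ j ∈ Finset.univ.erase i,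
            (H i * (A i i) ^ k * A i j).mulVec (e k j) t := by
      rw [mulVec_finsum]
      rw [Finset.sum_apply]
      refine Finset.sum_congr rfl ?_
      intro k _
      rw [Matrix.mulVec_mulVec, hveq k, mulVec_finsum, Finset.sum_apply]
      refine Finset.sum_congr rfl ?_
      intro j hj
      rw [Matrix.mulVec_mulVec]
    rw [expand]
    have hbound : ∑ k ∈ Finset.range K, ∑ j ∈ Finset.univ.erase i,
            (H i * (A i i) ^ k * A i j).mulVec (e k j) t
        ≤ ∑ j ∈ Finset.univ.erase i, ∑' k : ℕ,
            matInfNorm (H i * (A i i) ^ k * A i j * Hflat j) := by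
      rw [Finset.sum_comm]
      refine Finset.sum_le_sum ?_
      intro j hj
      have hjne : j ≠ i := Finset.ne_of_mem_erase hj
      have step1 : ∑ k ∈ Finset.range K, (H i * (A i i) ^ k * A i j).mulVec (e k j) t
          ≤ ∑ k ∈ Finset.range K, matInfNorm (H i * (A i i) ^ k * A i j * Hflat j) := by
        refine Finset.sum_le_sum ?_
        intro k _
        exact le_trans (le_abs_self _) (hkey i j hjne k (e k j) (he k j hj) t)
      refine step1.trans ?_
      exact Summable.sum_le_tsum (Finset.range K)
        (fun k _ => matInfNorm_nonneg _) (hSummable i j hjne)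
    exact le_trans hbound (le_of_lt (hbeta i))
  -- RPI property
  have hRPI : ∀ i, ∀ x ∈ Ss i, ∀ v ∈ Vs i, (A i i).mulVec x + v ∈ Ss i := by
    intro i x hx v hv
    obtain ⟨K, w, hw, rfl⟩ := hx
    refine ⟨K + 1, fun k => Nat.rec v (fun k' _ => w k') k, ?_, ?_⟩
    · intro k
      cases k with
      | zero => exact hv
      | succ k' => exact hw k'
    · rw [Finset.sum_range_succ']
      simp only []
      rw [mulVec_finsum]
      congr 1
      · refine Finset.sum_congr rfl ?_
        intro k _
        rw [Matrix.mulVec_mulVec, ← pow_succ']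
      · show v = (A i i ^ 0).mulVec v
        rw [pow_zero, Matrix.one_mulVec]
  refine ⟨Ss, fun i => ⟨0, hS0 i⟩, hsub, hRPI, ?_⟩
  intro e he i
  refine hRPI i (e i) (he i) _ ⟨e, ?_, rfl⟩
  intro j hj
  exact hsub j (he j)
end
end

section
/- Let M ≥ 1 and consider blocks Ā_{ij} ∈ ℝ^{n_i×n_j}, zonotopes E_i = {x : H_i x ≤ 1} = {Ξ_i d : ‖d‖_∞ ≤ 1} ⊂ ℝ^{n_i} centered at the origin with H_i of full column rank and left inverse H_i^♭, zonotopes W_i = {Δ_i l : ‖l‖_∞ ≤ 1} ⊂ ℝ^{r_i} centered at the origin, and matrices D_i ∈ ℝ^{n_i×r_i}. For each i let Ψ_i be the horizontal concatenation [Ā_{i j_1} Ξ_{j_1}, …, Ā_{i j_z} Ξ_{j_z}, D_i Δ_i] over the indices j_1,…,j_z ≠ i with Ā_{ij} ≠ 0. Assume every Ā_{ii} is Schur, β_i := Σ_{j≠i} Σ_{k=0}^∞ ‖H_i Ā_{ii}^k Ā_{ij} H_j^♭‖_∞ < 1 for all i, and γ_i := Σ_{k=0}^∞ ‖H_i Ā_{ii}^k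 Ψ_i‖_∞ < 1 for all i. Then for every i there exists a nonempty RPI set S_i ⊆ E_i for the dynamics e_i⁺ = Ā_{ii} e_i + ṽ_i with ṽ_i ranging over Ṽ_i = (⊕_{j≠i} Ā_{ij} E_j) ⊕ D_i W_i, and the product S = ∏_i S_i is an RPI set for the collective dynamics e⁺ = Ā e + D w with w ∈ ∏_i W_i, where Ā is the block matrix with blocks Ā_{ij} and D = diag(D_1,…,D_M). -/
open scoped BigOperators Classical
open Matrix

noncomputable section

/-- The matrix `Ψ i`: horizontal concatenation of the blocks `Ā_{ij} Ξ j` over the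
parents `j ≠ i` with `Ā_{ij} ≠ 0`, followed by the block `D i * Δ i`. -/
def PsiMat {M : ℕ} {n nb r rb : Fin M → ℕ}
    (A : ∀ i j : Fin M, Matrix (Fin (n i)) (Fin (n j)) ℝ)
    (Ξ : ∀ i, Matrix (Fin (n i)) (Fin (nb i)) ℝ)
    (Dm : ∀ i, Matrix (Fin (n i)) (Fin (r i)) ℝ)
    (Δ : ∀ i, Matrix (Fin (r i)) (Fin (rb i)) ℝ) (i : Fin M) :
    Matrix (Fin (n i)) ((Σ j : {j : Fin M // j ≠ i ∧ A i j ≠ 0}, Fin (nb j.1)) ⊕ Fin (rb i)) ℝ :=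
  Matrix.of fun row c =>
    match c with
    | Sum.inl ⟨j, c'⟩ => (A i j.1 * Ξ j.1) row c'
    | Sum.inr c' => (Dm i * Δ i) row c'

lemma abs_le_vecInfNorm {m : Type*} [Fintype m] (v : m → ℝ) (t : m) :
    |v t| ≤ vecInfNorm v :=
  le_ciSup (f := fun s => |v s|) (Set.Finite.bddAbove (Set.finite_range _)) t

lemma abs_mulVec_le_matInfNorm {m n : Type*} [Fintype m] [Fintype n] (B : Matrix m n ℝ)
    (v : n → ℝ) (hv : vecInfNorm v ≤ 1) (t : m) : |B.mulVec v t| ≤ matInfNorm B := by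
  have h1 : ∀ c, |v c| ≤ 1 := fun c => (abs_le_vecInfNorm v c).trans hv
  calc |B.mulVec v t| = |∑ c, B t c * v c| := by simp [Matrix.mulVec, dotProduct]
    _ ≤ ∑ c, |B t c * v c| := Finset.abs_sum_le_sum_abs _ _
    _ ≤ ∑ c, |B t c| := Finset.sum_le_sum fun c _ => by
        rw [abs_mul]; exact mul_le_of_le_one_right (abs_nonneg _) (h1 c)
    _ ≤ matInfNorm B :=
        le_ciSup (f := fun s => ∑ c, |B s c|) (Set.Finite.bddAbove (Set.finite_range _)) t

/-- Proposition 2: with bounded zonotopic disturbances, the conditions `β i < 1` and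
`γ i < 1` guarantee nonempty RPI sets `S i ⊆ E i` for the local error dynamics
`e⁺ = Ā_{ii} e + ṽ`, `ṽ ∈ Ṽ i = (⊕_{j≠i} Ā_{ij} E j) ⊕ D i W i`, whose product is RPI
for the collective dynamics `e⁺ = Ā e + D w`, `w ∈ ∏ i, W i`. -/
theorem prop2
    (M : ℕ) (hM : 1 ≤ M)
    (n τ nb r rb : Fin M → ℕ)
    (A : ∀ i j : Fin M, Matrix (Fin (n i)) (Fin (n j)) ℝ)
    (H : ∀ i, Matrix (Fin (τ i)) (Fin (n i)) ℝ)
    (Hflat : ∀ i, Matrix (Fin (n i)) (Fin (τ i)) ℝ)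
    (Ξ : ∀ i, Matrix (Fin (n i)) (Fin (nb i)) ℝ)
    (Dm : ∀ i, Matrix (Fin (n i)) (Fin (r i)) ℝ)
    (Δ : ∀ i, Matrix (Fin (r i)) (Fin (rb i)) ℝ)
    (E : ∀ i, Set (Fin (n i) → ℝ))
    (W : ∀ i, Set (Fin (r i) → ℝ))
    (hrank : ∀ i, (H i).rank = n i)
    (hleft : ∀ i, Hflat i * H i = 1)
    (hEdual : ∀ i, E i = {x | ∀ t, (H i).mulVec x t ≤ 1})
    (hEgen : ∀ i, E i = {x | ∃ d : Fin (nb i) → ℝ, vecInfNorm d ≤ 1 ∧ x = (Ξ i).mulVec d})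
    (hWgen : ∀ i, W i = {w | ∃ l : Fin (rb i) → ℝ, vecInfNorm l ≤ 1 ∧ w = (Δ i).mulVec l})
    (hSchur : ∀ i, IsSchur (A i i))
    (hbetaSummable : ∀ i j, j ≠ i →
      Summable (fun k : ℕ => matInfNorm (H i * (A i i) ^ k * A i j * Hflat j)))
    (hbeta : ∀ i,
      ∑ j ∈ Finset.univ.erase i, ∑' k : ℕ,
        matInfNorm (H i * (A i i) ^ k * A i j * Hflat j) < 1)
    (hgammaSummable : ∀ i,
      Summable (fun k : ℕ => matInfNorm (H i * (A i i) ^ k * PsiMat A Ξ Dm Δ i)))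
    (hgamma : ∀ i,
      ∑' k : ℕ, matInfNorm (H i * (A i i) ^ k * PsiMat A Ξ Dm Δ i) < 1) :
    ∃ S : ∀ i, Set (Fin (n i) → ℝ),
      (∀ i, (S i).Nonempty) ∧
      (∀ i, S i ⊆ E i) ∧
      -- `S i` is RPI for `e⁺ = Ā_{ii} e + ṽ`, `ṽ ∈ Ṽ i = (⊕_{j≠i} Ā_{ij} E j) ⊕ D i W i`
      (∀ i, ∀ x ∈ S i,
        ∀ v ∈ {v : Fin (n i) → ℝ | ∃ (e : ∀ j, Fin (n j) → ℝ) (w : Fin (r i) → ℝ),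
            (∀ j ∈ Finset.univ.erase i, e j ∈ E j) ∧ w ∈ W i ∧
            v = (∑ j ∈ Finset.univ.erase i, (A i j).mulVec (e j)) + (Dm i).mulVec w},
          (A i i).mulVec x + v ∈ S i) ∧
      -- the product `S = ∏ i, S i` is RPI for `e⁺ = Ā e + D w`, `w ∈ ∏ i, W i`
      (∀ e : ∀ j, Fin (n j) → ℝ, (∀ j, e j ∈ S j) →
        ∀ w : ∀ j, Fin (r j) → ℝ, (∀ j, w j ∈ W j) →
          ∀ i, (A i i).mulVec (e i) + (∑ j ∈ Finset.univ.erase i, (A i j).mulVec (e j))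
                + (Dm i).mulVec (w i) ∈ S i) := by
  classical
  -- Candidate invariant sets: all convergent sums `∑ₖ A_{ii}^k Ψᵢ dₖ` with `‖dₖ‖_∞ ≤ 1`.
  set S : ∀ i, Set (Fin (n i) → ℝ) := fun i => {x | ∃ d : ℕ →
      ((Σ j : {j : Fin M // j ≠ i ∧ A i j ≠ 0}, Fin (nb j.1)) ⊕ Fin (rb i)) → ℝ,
      (∀ k, vecInfNorm (d k) ≤ 1) ∧
      HasSum (fun k => ((A i i) ^ k * PsiMat A Ξ Dm Δ i).mulVec (d k)) x} with hS
  have hsub : ∀ i, S i ⊆ E i := by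
    intro i x hx
    obtain ⟨d, hd, hsum⟩ := hx
    rw [hEdual]
    intro t
    have hHsum :
        HasSum (fun k => (H i).mulVec (((A i i) ^ k * PsiMat A Ξ Dm Δ i).mulVec (d k)))
          ((H i).mulVec x) :=
      hsum.mapL (LinearMap.toContinuousLinearMap (Matrix.mulVecLin (H i)))
    have hcomp :
        HasSum (fun k => ((H i * (A i i) ^ k * PsiMat A Ξ Dm Δ i).mulVec (d k)) t)
          ((H i).mulVec x t) := by
      have := Pi.hasSum.mp hHsum t
      refine this.congr_fun fun k => ?_
      rw [Matrix.mulVec_mulVec, Matrix.mul_assoc]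
    have hle : ∀ k, ((H i * (A i i) ^ k * PsiMat A Ξ Dm Δ i).mulVec (d k)) t
        ≤ matInfNorm (H i * (A i i) ^ k * PsiMat A Ξ Dm Δ i) := fun k =>
      le_trans (le_abs_self _) (abs_mulVec_le_matInfNorm _ _ (hd k) t)
    have hb := Summable.tsum_le_tsum hle hcomp.summable (hgammaSummable i)
    rw [hcomp.tsum_eq] at hb
    exact hb.trans (hgamma i).le
  have hrpi : ∀ i, ∀ x ∈ S i,
      ∀ v ∈ {v : Fin (n i) → ℝ | ∃ (e : ∀ j, Fin (n j) → ℝ) (w : Fin (r i) → ℝ),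
          (∀ j ∈ Finset.univ.erase i, e j ∈ E j) ∧ w ∈ W i ∧
          v = (∑ j ∈ Finset.univ.erase i, (A i j).mulVec (e j)) + (Dm i).mulVec w},
        (A i i).mulVec x + v ∈ S i := by
    intro i x hx v hv
    obtain ⟨d, hd, hsum⟩ := hx
    obtain ⟨e, w, he, hw, hveq⟩ := hv
    -- represent `v` as `Ψᵢ d0` with `‖d0‖_∞ ≤ 1`
    have he' : ∀ j : {j : Fin M // j ≠ i ∧ A i j ≠ 0},
        ∃ c : Fin (nb j.1) → ℝ, vecInfNorm c ≤ 1 ∧ e j.1 = (Ξ j.1).mulVec c := by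
      intro j
      have hmem : e j.1 ∈ E j.1 := he j.1 (Finset.mem_erase.mpr ⟨j.2.1, Finset.mem_univ _⟩)
      rw [hEgen] at hmem; exact hmem
    choose c hc1 hc2 using he'
    rw [hWgen] at hw
    obtain ⟨l, hl1, hl2⟩ := hw
    set d0 : ((Σ j : {j : Fin M // j ≠ i ∧ A i j ≠ 0}, Fin (nb j.1)) ⊕ Fin (rb i)) → ℝ :=
      fun s => Sum.casesOn s (fun a => c a.1 a.2) (fun b => l b) with hd0
    have hd0norm : vecInfNorm d0 ≤ 1 := by
      refine Real.iSup_le ?_ zero_le_one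
      rintro (⟨j, c'⟩ | c')
      · exact (abs_le_vecInfNorm (c j) c').trans (hc1 j)
      · exact (abs_le_vecInfNorm l c').trans hl1
    have hvrep : v = (PsiMat A Ξ Dm Δ i).mulVec d0 := by
      have hsum_eq : (∑ j ∈ Finset.univ.erase i, (A i j).mulVec (e j))
          = ∑ j : {j : Fin M // j ≠ i ∧ A i j ≠ 0}, (A i j.1).mulVec (e j.1) := by
        rw [← Finset.sum_subtype (Finset.univ.filter fun j => j ≠ i ∧ A i j ≠ 0)
          (fun j => by simp) (fun j => (A i j).mulVec (e j))]
        refine (Finset.sum_subset ?_ ?_).symm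
        · intro j hj
          simp only [Finset.mem_filter, Finset.mem_univ, true_and] at hj
          exact Finset.mem_erase.mpr ⟨hj.1, Finset.mem_univ _⟩
        · intro j hj hnj
          simp only [Finset.mem_erase, Finset.mem_univ, and_true] at hj
          simp only [Finset.mem_filter, Finset.mem_univ, true_and, not_and, not_not] at hnj
          rw [hnj hj, Matrix.zero_mulVec]
      funext t
      rw [hveq]
      have hpsi : (PsiMat A Ξ Dm Δ i).mulVec d0 t
          = (∑ j : {j : Fin M // j ≠ i ∧ A i j ≠ 0},
              ((A i j.1 * Ξ j.1).mulVec (c j)) t) + ((Dm i * Δ i).mulVec l) t := by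
        simp only [hd0, Matrix.mulVec, dotProduct, Fintype.sum_sum_type]
        congr 1
        rw [← Finset.univ_sigma_univ, Finset.sum_sigma]
        exact Finset.sum_congr rfl fun a _ => Finset.sum_congr rfl fun b _ => rfl
      rw [hpsi]
      simp only [Pi.add_apply, hsum_eq, Finset.sum_apply]
      congr 1
      · refine Finset.sum_congr rfl fun j _ => ?_
        rw [hc2 j, Matrix.mulVec_mulVec]
      · rw [hl2, Matrix.mulVec_mulVec]
    -- the shifted coefficient sequence
    refine ⟨fun k => Nat.casesOn (motive := fun _ => _) k d0 fun m => d m,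
      fun k => ?_, ?_⟩
    · cases k with
      | zero => exact hd0norm
      | succ m => exact hd m
    · have hAsum :
          HasSum (fun k => (A i i).mulVec (((A i i) ^ k * PsiMat A Ξ Dm Δ i).mulVec (d k)))
            ((A i i).mulVec x) :=
        hsum.mapL (LinearMap.toContinuousLinearMap (Matrix.mulVecLin (A i i)))
      have hshift :
          HasSum (fun k => ((A i i) ^ (k + 1) * PsiMat A Ξ Dm Δ i).mulVec (d k))
            ((A i i).mulVec x) := by
        refine hAsum.congr_fun fun k => ?_
        rw [pow_succ', Matrix.mul_assoc, ← Matrix.mulVec_mulVec]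
      have hfin := (hasSum_nat_add_iff
        (f := fun k => ((A i i) ^ k * PsiMat A Ξ Dm Δ i).mulVec
          (Nat.casesOn (motive := fun _ => _) k d0 fun m => d m)) 1).mp hshift
      rw [Finset.sum_range_one] at hfin
      have hzero : ((A i i) ^ 0 * PsiMat A Ξ Dm Δ i).mulVec d0 = v := by
        rw [pow_zero, Matrix.one_mul, hvrep]
      rw [← hzero]
      exact hfin
  refine ⟨S, ?_, hsub, hrpi, ?_⟩
  · -- nonempty: take d ≡ 0
    intro i
    have h0 : (0 : Fin (n i) → ℝ) ∈ S i := by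
      simp only [hS, Set.mem_setOf_eq]
      refine ⟨fun _ => (0 : ((Σ j : {j : Fin M // j ≠ i ∧ A i j ≠ 0}, Fin (nb j.1)) ⊕ Fin (rb i)) → ℝ), fun k => ?_, ?_⟩
      · exact Real.iSup_le (fun c => by simp) zero_le_one
      · simpa [Matrix.mulVec_zero] using (hasSum_zero :
          HasSum (fun _ : ℕ => (0 : Fin (n i) → ℝ)) 0)
    exact ⟨0, h0⟩
  · -- collective RPI follows from the local one
    intro e he w hw i
    have hv : ((∑ j ∈ Finset.univ.erase i, (A i j).mulVec (e j)) + (Dm i).mulVec (w i)) ∈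
        {v : Fin (n i) → ℝ | ∃ (e' : ∀ j, Fin (n j) → ℝ) (w' : Fin (r i) → ℝ),
          (∀ j ∈ Finset.univ.erase i, e' j ∈ E j) ∧ w' ∈ W i ∧
          v = (∑ j ∈ Finset.univ.erase i, (A i j).mulVec (e' j)) + (Dm i).mulVec w'} :=
      ⟨e, w i, fun j _ => hsub j (he j), hw i, rfl⟩
    have := hrpi i (e i) (he i) _ hv
    rwa [← add_assoc] at this
end
end

section
/- Let A ∈ ℝ^{n×n} have spectral radius strictly less than 1, let Ψ ∈ ℝ^{n×q}, and let S = { Σ_{k=0}^∞ A^k Ψ d_k : d_k ∈ ℝ^q, ‖d_k‖_∞ ≤ 1 for all k }. Let H ∈ ℝ^{τ̄×n} have rows h_1ᵀ,…,h_{τ̄}ᵀ. If for every row index τ the (convergent) series Σ_{k=0}^∞ ‖Ψᵀ (Aᵀ)^k h_τ‖_1 is at most 1, then S ⊆ {x ∈ ℝ^n : H x ≤ 1 componentwise}. Moreover, sup_{x ∈ S} h_τᵀ x = Σ_{k=0}^∞ ‖Ψᵀ (Aᵀ)^k h_τ‖_1 for each τ. -/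
open scoped BigOperators ENNReal NNReal
open Matrix Filter

noncomputable section

attribute [local instance] Matrix.linftyOpNormedRing Matrix.linftyOpNormedAlgebra

lemma schur_bound {n : ℕ} (A : Matrix (Fin n) (Fin n) ℝ) (hA : IsSchur A) :
    ∃ a : ℕ → ℝ, (∀ k, 0 ≤ a k) ∧ Summable a ∧ ∀ k i j, |(A ^ k) i j| ≤ a k := by
  haveI : CompleteSpace (Matrix (Fin n) (Fin n) ℂ) :=
    inferInstance
  set B : Matrix (Fin n) (Fin n) ℂ := A.map (algebraMap ℝ ℂ) with hB
  refine ⟨fun k => ‖B ^ k‖, fun k => norm_nonneg _, ?_, ?_⟩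
  · rcases Nat.eq_zero_or_pos n with hn | hn
    · subst hn
      have h0 : ∀ k, ‖B ^ k‖ = 0 := by
        intro k
        simp [Matrix.linfty_opNorm_def]
      simpa [h0] using summable_zero
    · haveI : Nonempty (Fin n) := ⟨⟨0, hn⟩⟩
      have hsr : spectralRadius ℂ B < 1 := by
        have := spectrum.spectralRadius_lt_of_forall_lt B (r := 1)
          (fun z hz => by exact_mod_cast hA z hz)
        simpa using this
      obtain ⟨c, hc1, hc2⟩ := exists_between hsr
      have hcT : c ≠ ⊤ := (hc2.trans ENNReal.one_lt_top).ne
      have hev := (spectrum.pow_nnnorm_pow_one_div_tendsto_nhds_spectralRadius B).eventually_lt_const hc1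
      obtain ⟨N, hN⟩ := eventually_atTop.mp hev
      set r : ℝ := c.toReal with hr
      have hr0 : 0 ≤ r := ENNReal.toReal_nonneg
      have hr1 : r < 1 := by
        have := (ENNReal.toReal_lt_toReal hcT ENNReal.one_ne_top).mpr hc2
        simpa using this
      set M := max N 1 with hM
      have key : ∀ k, ‖B ^ (k + M)‖ ≤ r ^ (k + M) := by
        intro k
        have hkM : N ≤ k + M := le_trans (le_max_left _ _) (Nat.le_add_left _ _)
        have hk0 : (0:ℝ) < (k + M : ℕ) := by
          have : 1 ≤ k + M := le_trans (le_max_right _ _) (Nat.le_add_left _ _)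
          exact_mod_cast Nat.lt_of_lt_of_le Nat.zero_lt_one this
        have h1 := (hN _ hkM).le
        have h2 : (‖B ^ (k + M)‖₊ : ℝ≥0∞) ≤ c ^ ((k + M : ℕ) : ℝ) := by
          calc (‖B ^ (k + M)‖₊ : ℝ≥0∞)
              = ((‖B ^ (k + M)‖₊ : ℝ≥0∞) ^ (1 / ((k + M : ℕ) : ℝ))) ^ ((k + M : ℕ) : ℝ) := by
                rw [← ENNReal.rpow_mul, one_div, inv_mul_cancel₀ (ne_of_gt hk0),
                  ENNReal.rpow_one]
            _ ≤ c ^ ((k + M : ℕ) : ℝ) := ENNReal.rpow_le_rpow h1 (le_of_lt hk0)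
        have h3 := (ENNReal.toReal_le_toReal (by simp)
            (ENNReal.rpow_ne_top_of_nonneg (le_of_lt hk0) hcT)).mpr h2
        rw [ENNReal.coe_toReal, coe_nnnorm] at h3
        refine h3.trans ?_
        rw [← ENNReal.toReal_rpow, Real.rpow_natCast]
      have hs : Summable fun k => ‖B ^ (k + M)‖ := by
        refine Summable.of_nonneg_of_le (fun k => norm_nonneg _) key ?_
        have : Summable fun k : ℕ => r ^ k * r ^ M :=
          (summable_geometric_of_lt_one hr0 hr1).mul_right _
        simpa [pow_add] using this
      exact (summable_nat_add_iff M).mp hs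
  · intro k i j
    have h1 : B ^ k = (A ^ k).map (algebraMap ℝ ℂ) := by
      rw [hB, ← RingHom.mapMatrix_apply, ← map_pow, RingHom.mapMatrix_apply]
    have h3 : ‖(B ^ k) i j‖₊ ≤ ‖B ^ k‖₊ := by
      rw [Matrix.linfty_opNNNorm_def]
      refine le_trans ?_ (Finset.le_sup (Finset.mem_univ i))
      exact Finset.single_le_sum (f := fun j' => ‖(B ^ k) i j'‖₊) (fun _ _ => zero_le) (Finset.mem_univ j)
    have h2 : |(A ^ k) i j| = ‖(B ^ k) i j‖ := by
      rw [h1]; simp [Matrix.map_apply]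
    rw [h2]
    exact_mod_cast h3

section Main
variable {n q tb : ℕ} (A : Matrix (Fin n) (Fin n) ℝ) (Ψ : Matrix (Fin n) (Fin q) ℝ)

lemma htr (k : ℕ) : Ψ.transpose * A.transpose ^ k = (A ^ k * Ψ).transpose := by
  rw [← Matrix.transpose_pow, ← Matrix.transpose_mul]

lemma wdef (k : ℕ) (h : Fin n → ℝ) (c : Fin q) :
    (Ψ.transpose * A.transpose ^ k).mulVec h c = ∑ r, (A ^ k * Ψ) r c * h r := by
  rw [htr]
  simp [Matrix.mulVec, dotProduct, Matrix.transpose_apply]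

lemma dot_identity (k : ℕ) (h : Fin n → ℝ) (d : Fin q → ℝ) :
    ∑ r, h r * (A ^ k * Ψ).mulVec d r
      = ∑ c, (Ψ.transpose * A.transpose ^ k).mulVec h c * d c := by
  rw [htr]
  simp only [Matrix.mulVec, dotProduct, Matrix.transpose_apply, Finset.sum_mul,
    Finset.mul_sum]
  rw [Finset.sum_comm]
  exact Finset.sum_congr rfl fun c _ => Finset.sum_congr rfl fun r _ => by ring

end Main

/-- Containment criterion for the minimal RPI set: if for every row `τ` of `H` the
series `Σ_k ‖Ψᵀ (Aᵀ)^k h_τ‖₁` is at most 1, then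
`S = ⊕_{k=0}^∞ A^k Ψ {‖d‖_∞ ≤ 1} ⊆ {x : H x ≤ 1}`; moreover the support function of
`S` in the direction of each row `h_τ` equals that series. -/
theorem mRPI_containment
    (n q tb : ℕ)
    (A : Matrix (Fin n) (Fin n) ℝ)
    (Ψ : Matrix (Fin n) (Fin q) ℝ)
    (hA : IsSchur A)
    (S : Set (Fin n → ℝ))
    (hS : S = {x | ∃ d : ℕ → (Fin q → ℝ), (∀ k, vecInfNorm (d k) ≤ 1) ∧
        HasSum (fun k : ℕ => (A ^ k * Ψ).mulVec (d k)) x})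
    (H : Matrix (Fin tb) (Fin n) ℝ)
    (hrows : ∀ t : Fin tb,
      ∑' k : ℕ, ∑ c, |(Ψ.transpose * A.transpose ^ k).mulVec (fun r => H t r) c| ≤ 1) :
    S ⊆ {x | ∀ t, H.mulVec x t ≤ 1} ∧
    ∀ t : Fin tb,
      sSup {y : ℝ | ∃ x ∈ S, y = (fun r => H t r) ⬝ᵥ x}
        = ∑' k : ℕ, ∑ c, |(Ψ.transpose * A.transpose ^ k).mulVec (fun r => H t r) c| := by
  obtain ⟨a, ha0, haS, haB⟩ := schur_bound A hA
  -- entrywise bound on A^k * Ψ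
  have hMent : ∀ (k : ℕ) (i : Fin n) (c : Fin q),
      |(A ^ k * Ψ) i c| ≤ a k * ∑ j, |Ψ j c| := by
    intro k i c
    calc |(A ^ k * Ψ) i c| = |∑ j, (A ^ k) i j * Ψ j c| := by rw [Matrix.mul_apply]
      _ ≤ ∑ j, |(A ^ k) i j * Ψ j c| := Finset.abs_sum_le_sum_abs _ _
      _ ≤ ∑ j, a k * |Ψ j c| := Finset.sum_le_sum fun j _ => by
          rw [abs_mul]; exact mul_le_mul_of_nonneg_right (haB k i j) (abs_nonneg _)
      _ = a k * ∑ j, |Ψ j c| := (Finset.mul_sum _ _ _).symm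
  -- bound on the row series terms
  have hwent : ∀ (t : Fin tb) (k : ℕ) (c : Fin q),
      |(Ψ.transpose * A.transpose ^ k).mulVec (fun r => H t r) c|
        ≤ a k * ((∑ j, |Ψ j c|) * ∑ r, |H t r|) := by
    intro t k c
    rw [wdef]
    calc |∑ r, (A ^ k * Ψ) r c * H t r|
        ≤ ∑ r, |(A ^ k * Ψ) r c * H t r| := Finset.abs_sum_le_sum_abs _ _
      _ ≤ ∑ r, (a k * ∑ j, |Ψ j c|) * |H t r| := Finset.sum_le_sum fun r _ => by
          rw [abs_mul]; exact mul_le_mul_of_nonneg_right (hMent k r c) (abs_nonneg _)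
      _ = a k * ((∑ j, |Ψ j c|) * ∑ r, |H t r|) := by
          rw [← Finset.mul_sum]; ring
  have hgle : ∀ (t : Fin tb) (k : ℕ),
      ∑ c, |(Ψ.transpose * A.transpose ^ k).mulVec (fun r => H t r) c|
        ≤ a k * ∑ c, ((∑ j, |Ψ j c|) * ∑ r, |H t r|) := by
    intro t k
    rw [Finset.mul_sum]
    exact Finset.sum_le_sum fun c _ => hwent t k c
  have hgS : ∀ t : Fin tb,
      Summable fun k => ∑ c, |(Ψ.transpose * A.transpose ^ k).mulVec (fun r => H t r) c| := by
    intro t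
    refine Summable.of_nonneg_of_le
      (fun k => Finset.sum_nonneg fun c _ => abs_nonneg _) (hgle t) ?_
    exact haS.mul_right _
  -- summability of coordinates for any admissible d
  have hfS : ∀ (d : ℕ → Fin q → ℝ), (∀ k c, |d k c| ≤ 1) → ∀ i : Fin n,
      Summable fun k => (A ^ k * Ψ).mulVec (d k) i := by
    intro d hd i
    refine Summable.of_norm_bounded (haS.mul_right (∑ c, ∑ j, |Ψ j c|)) fun k => ?_
    rw [Real.norm_eq_abs]
    calc |(A ^ k * Ψ).mulVec (d k) i|
        = |∑ c, (A ^ k * Ψ) i c * d k c| := by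
          simp [Matrix.mulVec, dotProduct]
      _ ≤ ∑ c, |(A ^ k * Ψ) i c * d k c| := Finset.abs_sum_le_sum_abs _ _
      _ ≤ ∑ c, a k * ∑ j, |Ψ j c| := Finset.sum_le_sum fun c _ => by
          rw [abs_mul]
          calc |(A ^ k * Ψ) i c| * |d k c| ≤ |(A ^ k * Ψ) i c| * 1 :=
                mul_le_mul_of_nonneg_left (hd k c) (abs_nonneg _)
            _ = |(A ^ k * Ψ) i c| := mul_one _
            _ ≤ a k * ∑ j, |Ψ j c| := hMent k i c
      _ = a k * ∑ c, ∑ j, |Ψ j c| := (Finset.mul_sum _ _ _).symm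
  -- from vecInfNorm bound to entrywise bound
  have hinf : ∀ (v : Fin q → ℝ), vecInfNorm v ≤ 1 → ∀ c, |v c| ≤ 1 := by
    intro v hv c
    refine le_trans ?_ hv
    unfold vecInfNorm
    exact le_ciSup (Set.Finite.bddAbove (Set.finite_range fun i => |v i|)) c
  -- main support bound: for x ∈ S, h_t ⬝ x has a HasSum representation
  have main : ∀ (t : Fin tb) (x : Fin n → ℝ), x ∈ S →
      (fun r => H t r) ⬝ᵥ x
        ≤ ∑' k, ∑ c, |(Ψ.transpose * A.transpose ^ k).mulVec (fun r => H t r) c| := by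
    intro t x hx
    rw [hS] at hx
    obtain ⟨d, hd, hsum⟩ := hx
    have hd1 : ∀ k c, |d k c| ≤ 1 := fun k c => hinf (d k) (hd k) c
    have hcoord : ∀ r, HasSum (fun k => (A ^ k * Ψ).mulVec (d k) r) (x r) :=
      fun r => Pi.hasSum.mp hsum r
    have hdot : HasSum (fun k => ∑ r, H t r * (A ^ k * Ψ).mulVec (d k) r)
        (∑ r, H t r * x r) :=
      hasSum_sum fun r _ => (hcoord r).mul_left (H t r)
    have hxv : (fun r => H t r) ⬝ᵥ x = ∑ r, H t r * x r := rfl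
    rw [hxv, ← hdot.tsum_eq]
    refine Summable.tsum_le_tsum (fun k => ?_) hdot.summable (hgS t)
    rw [dot_identity]
    refine Finset.sum_le_sum fun c _ => ?_
    calc (Ψ.transpose * A.transpose ^ k).mulVec (fun r => H t r) c * d k c
        ≤ |(Ψ.transpose * A.transpose ^ k).mulVec (fun r => H t r) c * d k c| := le_abs_self _
      _ = |(Ψ.transpose * A.transpose ^ k).mulVec (fun r => H t r) c| * |d k c| := abs_mul _ _
      _ ≤ |(Ψ.transpose * A.transpose ^ k).mulVec (fun r => H t r) c| * 1 :=
          mul_le_mul_of_nonneg_left (hd1 k c) (abs_nonneg _)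
      _ = _ := mul_one _
  constructor
  · intro x hx t
    exact le_trans (main t x hx) (hrows t)
  · intro t
    -- extremizing disturbance
    set w : ℕ → Fin q → ℝ :=
      fun k => (Ψ.transpose * A.transpose ^ k).mulVec (fun r => H t r) with hw
    set d : ℕ → Fin q → ℝ := fun k c => if 0 ≤ w k c then 1 else -1 with hd
    have hd1 : ∀ k c, |d k c| ≤ 1 := by
      intro k c
      by_cases h0 : 0 ≤ w k c <;> simp [hd, h0]
    have hdinf : ∀ k, vecInfNorm (d k) ≤ 1 := by
      intro k
      exact Real.iSup_le (fun c => hd1 k c) zero_le_one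
    have hwd : ∀ k c, w k c * d k c = |w k c| := by
      intro k c
      rcases le_or_gt 0 (w k c) with hc | hc
      · rw [hd]; simp only []
        rw [if_pos hc, mul_one, abs_of_nonneg hc]
      · rw [hd]; simp only []
        rw [if_neg (not_le.mpr hc), abs_of_neg hc]; ring
    set x : Fin n → ℝ := fun i => ∑' k, (A ^ k * Ψ).mulVec (d k) i with hxdef
    have hxsum : HasSum (fun k => (A ^ k * Ψ).mulVec (d k)) x :=
      Pi.hasSum.mpr fun i => (hfS d hd1 i).hasSum
    have hxS : x ∈ S := by
      rw [hS]; exact ⟨d, hdinf, hxsum⟩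
    have hcoord : ∀ r, HasSum (fun k => (A ^ k * Ψ).mulVec (d k) r) (x r) :=
      fun r => Pi.hasSum.mp hxsum r
    have hdot : HasSum (fun k => ∑ r, H t r * (A ^ k * Ψ).mulVec (d k) r)
        (∑ r, H t r * x r) :=
      hasSum_sum fun r _ => (hcoord r).mul_left (H t r)
    have hterm : ∀ k, ∑ r, H t r * (A ^ k * Ψ).mulVec (d k) r
        = ∑ c, |(Ψ.transpose * A.transpose ^ k).mulVec (fun r => H t r) c| := by
      intro k
      rw [dot_identity]
      exact Finset.sum_congr rfl fun c _ => hwd k c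
    have hdot2 : HasSum
        (fun k => ∑ c, |(Ψ.transpose * A.transpose ^ k).mulVec (fun r => H t r) c|)
        (∑ r, H t r * x r) := by
      have h2 := hdot
      rwa [funext hterm] at h2
    have hxval : (fun r => H t r) ⬝ᵥ x
        = ∑' k, ∑ c, |(Ψ.transpose * A.transpose ^ k).mulVec (fun r => H t r) c| := by
      have h3 : (fun r => H t r) ⬝ᵥ x = ∑ r, H t r * x r := rfl
      rw [h3, ← hdot2.tsum_eq]
    refine le_antisymm ?_ ?_
    · refine csSup_le ⟨(fun r => H t r) ⬝ᵥ x, ⟨x, hxS, rfl⟩⟩ ?_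
      rintro y ⟨z, hz, rfl⟩
      exact main t z hz
    · rw [← hxval]
      refine le_csSup ⟨∑' k, ∑ c,
        |(Ψ.transpose * A.transpose ^ k).mulVec (fun r => H t r) c|, ?_⟩ ⟨x, hxS, rfl⟩
      rintro y ⟨z, hz, rfl⟩
      exact main t z hz
end
end
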